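/- arXiv:1008.1894 — 2 statements merged into one kernel-verified Lean document; each statement's English description precedes it below -/
import Mathlib

section
/- For every n ∈ ℕ, every x ∈ ℝ, and every h ∈ ℂ with Re(h) > 1, the (h,q)-Bernoulli polynomial satisfies the binomial expansion β_{n,q}^h(x) = Σ_{l=0}^{n} C(n,l) · q^{lx} · β_{l,q}^h · [x]_q^{n−l}, where β_{l,q}^h = β_{l,q}^h(0). -/
open Complex Finset Filter

/-- Complex power `q^z := exp(z·log q)` for a real base `q`. -/
noncomputable def qcpow (q : ℝ) (z : ℂ) : ℂ := Complex.exp (z * (Real.log q : ℂ))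

/-- The complex `q`-number `[z]_q = (1 - q^z)/(1 - q)`. -/
noncomputable def qnum (q : ℝ) (z : ℂ) : ℂ := (1 - qcpow q z) / (1 - (q : ℂ))

/-- The real `q`-number `[y]_q = (1 - q^y)/(1 - q)` for real `y`. -/
noncomputable def qnumR (q : ℝ) (y : ℝ) : ℝ := (1 - Real.exp (y * Real.log q)) / (1 - q)

/-- The `(h,q)`-Bernoulli polynomial
`β_{n,q}^h(x) = (1-q)^{-n} ∑_{l=0}^{n} C(n,l) (-1)^l q^{lx} (l+h-1)/[l+h-1]_q`. -/
noncomputable def qbeta (q : ℝ) (h : ℂ) (n : ℕ) (x : ℝ) : ℂ :=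
  (1 - (q : ℂ))⁻¹ ^ n * ∑ l ∈ Finset.range (n + 1),
    (n.choose l : ℂ) * (-1) ^ l * qcpow q ((l : ℂ) * (x : ℂ)) *
      (((l : ℂ) + h - 1) / qnum q ((l : ℂ) + h - 1))

lemma qcpow_nat_mul (q : ℝ) (l : ℕ) (x : ℂ) : qcpow q ((l : ℂ) * x) = qcpow q x ^ l := by
  unfold qcpow
  rw [mul_assoc, ← Complex.exp_nat_mul]


/-- binomial expansion
`β_{n,q}^h(x) = ∑_{l=0}^{n} C(n,l) q^{lx} β_{l,q}^h [x]_q^{n-l}`. -/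
theorem qbeta_binomial_expansion (q : ℝ) (hq0 : 0 < q) (hq1 : q < 1)
    (h : ℂ) (hh : 1 < h.re) (n : ℕ) (x : ℝ) :
    qbeta q h n x = ∑ l ∈ Finset.range (n + 1),
      (n.choose l : ℂ) * qcpow q ((l : ℂ) * (x : ℂ)) * qbeta q h l 0 *
        qnum q (x : ℂ) ^ (n - l) := by
  have hne : (1 : ℂ) - (q : ℂ) ≠ 0 := by
    rw [sub_ne_zero]
    exact fun e => hq1.ne' (by exact_mod_cast e)
  set c : ℂ := (1 - (q : ℂ))⁻¹ with hc
  set Q : ℂ := qcpow q (x : ℂ) with hQ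
  set F : ℕ → ℂ := fun j => (((j : ℂ) + h - 1) / qnum q ((j : ℂ) + h - 1)) with hF
  have hqnum : qnum q (x : ℂ) = (1 - Q) * c := by
    rw [qnum, div_eq_mul_inv]
  have hq0' : ∀ j : ℕ, qcpow q ((j : ℂ) * ((0 : ℝ) : ℂ)) = 1 := by
    intro j; simp [qcpow]
  -- rewrite both sides
  rw [qbeta]
  simp only [qcpow_nat_mul]
  calc c ^ n * ∑ l ∈ Finset.range (n + 1),
        (n.choose l : ℂ) * (-1) ^ l * Q ^ l * F l
      = c ^ n * ∑ j ∈ Finset.range (n + 1), ∑ l ∈ Finset.Icc j n,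
          (n.choose l : ℂ) * (l.choose j) * (-1) ^ j * Q ^ l * (1 - Q) ^ (n - l) * F j := by
        congr 1
        refine Finset.sum_congr rfl fun j hj => ?_
        rw [Finset.mem_range, Nat.lt_succ_iff] at hj
        have key : ∑ l ∈ Finset.Icc j n,
            (n.choose l : ℂ) * (l.choose j) * Q ^ l * (1 - Q) ^ (n - l)
            = (n.choose j : ℂ) * Q ^ j := by
          have : ∀ l ∈ Finset.Icc j n,
              (n.choose l : ℂ) * (l.choose j) * Q ^ l * (1 - Q) ^ (n - l)
              = (n.choose j : ℂ) * Q ^ j *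
                (((n - j).choose (l - j) : ℂ) * Q ^ (l - j) * (1 - Q) ^ ((n - j) - (l - j))) := by
            intro l hl
            rw [Finset.mem_Icc] at hl
            have h1 : (n.choose l : ℂ) * (l.choose j) = (n.choose j : ℂ) * ((n - j).choose (l - j)) := by
              have := Nat.choose_mul (n := n) hl.1
              exact_mod_cast congrArg (Nat.cast : ℕ → ℂ) this
            have h2 : Q ^ l = Q ^ j * Q ^ (l - j) := by
              rw [← pow_add, Nat.add_sub_cancel' hl.1]
            have h3 : (n : ℕ) - l = (n - j) - (l - j) := by omega
            rw [h1, h2, h3]; ring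
          rw [Finset.sum_congr rfl this, ← Finset.mul_sum]
          have : ∑ l ∈ Finset.Icc j n,
              ((n - j).choose (l - j) : ℂ) * Q ^ (l - j) * (1 - Q) ^ ((n - j) - (l - j))
              = ∑ m ∈ Finset.range (n - j + 1),
                ((n - j).choose m : ℂ) * Q ^ m * (1 - Q) ^ ((n - j) - m) := by
            rw [show Finset.Icc j n = Finset.Ico j (n + 1) by rfl,
              Finset.sum_Ico_eq_sum_range]
            have hr : n + 1 - j = n - j + 1 := by omega
            rw [hr]
            exact Finset.sum_congr rfl fun m _ => by rw [Nat.add_sub_cancel_left]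
          rw [this]
          have hb := add_pow Q (1 - Q) (n - j)
          simp only [add_sub_cancel, one_pow] at hb
          have hre : ∑ m ∈ Finset.range (n - j + 1),
              ((n - j).choose m : ℂ) * Q ^ m * (1 - Q) ^ ((n - j) - m)
              = ∑ m ∈ Finset.range (n - j + 1),
                Q ^ m * (1 - Q) ^ ((n - j) - m) * ((n - j).choose m : ℂ) :=
            Finset.sum_congr rfl fun m _ => by ring
          rw [hre, ← hb, mul_one]
        calc (n.choose j : ℂ) * (-1) ^ j * Q ^ j * F j
            = ((n.choose j : ℂ) * Q ^ j) * ((-1) ^ j * F j) := by ring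
          _ = (∑ l ∈ Finset.Icc j n,
                (n.choose l : ℂ) * (l.choose j) * Q ^ l * (1 - Q) ^ (n - l)) *
                ((-1) ^ j * F j) := by rw [key]
          _ = _ := by rw [Finset.sum_mul]; exact Finset.sum_congr rfl fun l _ => by ring
    _ = ∑ l ∈ Finset.range (n + 1),
          (n.choose l : ℂ) * Q ^ l * qbeta q h l 0 * qnum q (x : ℂ) ^ (n - l) := by
        -- swap sums
        rw [Finset.mul_sum]
        rw [show (∑ j ∈ Finset.range (n + 1), c ^ n * ∑ l ∈ Finset.Icc j n,
            (n.choose l : ℂ) * (l.choose j) * (-1) ^ j * Q ^ l * (1 - Q) ^ (n - l) * F j)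
            = ∑ j ∈ Finset.range (n + 1), ∑ l ∈ Finset.range (n + 1),
              if j ≤ l then c ^ n * ((n.choose l : ℂ) * (l.choose j) * (-1) ^ j * Q ^ l
                * (1 - Q) ^ (n - l) * F j) else 0 from ?_]
        · rw [Finset.sum_comm]
          refine Finset.sum_congr rfl fun l hl => ?_
          rw [Finset.mem_range, Nat.lt_succ_iff] at hl
          have : ∑ j ∈ Finset.range (n + 1),
              (if j ≤ l then c ^ n * ((n.choose l : ℂ) * (l.choose j) * (-1) ^ j * Q ^ l
                * (1 - Q) ^ (n - l) * F j) else 0)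
              = ∑ j ∈ Finset.range (l + 1), c ^ n * ((n.choose l : ℂ) * (l.choose j) * (-1) ^ j
                * Q ^ l * (1 - Q) ^ (n - l) * F j) := by
            rw [← Finset.sum_filter]
            congr 1
            ext m
            simp only [Finset.mem_filter, Finset.mem_range]
            omega
          rw [this, qbeta, hqnum]
          simp only [hq0', mul_one]
          rw [Finset.mul_sum, Finset.mul_sum, Finset.sum_mul]
          refine Finset.sum_congr rfl fun j _ => ?_
          have hcn : c ^ n = c ^ l * c ^ (n - l) := by
            rw [← pow_add, Nat.add_sub_cancel' hl]
          rw [hcn, mul_pow]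
          ring
        · refine Finset.sum_congr rfl fun j hj => ?_
          rw [Finset.mul_sum]
          rw [Finset.mem_range, Nat.lt_succ_iff] at hj
          rw [← Finset.sum_filter]
          congr 1
          ext m
          simp only [Finset.mem_filter, Finset.mem_range, Finset.mem_Icc]
          omega
end

section
/- For every k ∈ ℕ with k ≥ 1, every real x > 0, and every h ∈ ℂ with Re(h) > 1, the series below converge absolutely and β_{k,q}^h(x) = −k · Σ_{n=0}^{∞} q^{hn+x}·[x+n]_q^{k−1} + (h−1)(1−q) · Σ_{n=0}^{∞} q^{(h−1)n}·[x+n]_q^{k}. -/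
open Complex Finset Filter

lemma qcpow_add' (q : ℝ) (a b : ℂ) : qcpow q (a + b) = qcpow q a * qcpow q b := by
  simp [qcpow, add_mul, Complex.exp_add]

lemma qcpow_mul_nat (q : ℝ) (c : ℂ) (n : ℕ) : qcpow q (c * n) = qcpow q c ^ n := by
  rw [qcpow, qcpow, ← Complex.exp_nat_mul]
  congr 1
  ring

lemma norm_qcpow (q : ℝ) (c : ℂ) : ‖qcpow q c‖ = Real.exp (c.re * Real.log q) := by
  rw [qcpow, Complex.norm_exp]
  congr 1
  simp [Complex.mul_re]

lemma norm_qcpow_lt_one {q : ℝ} (hq0 : 0 < q) (hq1 : q < 1) {c : ℂ} (hc : 0 < c.re) :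
    ‖qcpow q c‖ < 1 := by
  rw [norm_qcpow]
  have hlog : Real.log q < 0 := Real.log_neg hq0 hq1
  calc Real.exp (c.re * Real.log q) < Real.exp 0 :=
        Real.exp_lt_exp.mpr (mul_neg_of_pos_of_neg hc hlog)
    _ = 1 := Real.exp_zero

lemma one_sub_qcpow_ne {q : ℝ} (hq0 : 0 < q) (hq1 : q < 1) {c : ℂ} (hc : 0 < c.re) :
    (1 : ℂ) - qcpow q c ≠ 0 := by
  intro e
  have h1 := norm_qcpow_lt_one hq0 hq1 hc
  rw [sub_eq_zero] at e
  rw [← e] at h1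
  simp at h1

lemma summable_qcpow {q : ℝ} (hq0 : 0 < q) (hq1 : q < 1) {c : ℂ} (hc : 0 < c.re) :
    Summable (fun n : ℕ => qcpow q (c * n)) := by
  simp_rw [qcpow_mul_nat]
  exact summable_geometric_of_norm_lt_one (norm_qcpow_lt_one hq0 hq1 hc)

lemma tsum_qcpow {q : ℝ} (hq0 : 0 < q) (hq1 : q < 1) {c : ℂ} (hc : 0 < c.re) :
    ∑' n : ℕ, qcpow q (c * n) = (1 - qcpow q c)⁻¹ := by
  simp_rw [qcpow_mul_nat]
  exact tsum_geometric_of_norm_lt_one (norm_qcpow_lt_one hq0 hq1 hc)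

lemma qnumR_cast (q y : ℝ) : ((qnumR q y : ℝ) : ℂ) = (1 - qcpow q (y : ℂ)) / (1 - (q : ℂ)) := by
  rw [qnumR, qcpow, ← Complex.ofReal_mul, ← Complex.ofReal_exp]
  push_cast
  ring

lemma qnumR_pow (q : ℝ) (y : ℝ) (m : ℕ) :
    ((qnumR q y : ℝ) : ℂ) ^ m =
      (∑ l ∈ Finset.range (m + 1),
        (m.choose l : ℂ) * (-1) ^ l * qcpow q ((l : ℂ) * (y : ℂ))) * (1 - (q : ℂ))⁻¹ ^ m := by
  rw [qnumR_cast, div_pow, div_eq_mul_inv, ← inv_pow]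
  congr 1
  rw [sub_eq_neg_add, add_pow]
  refine Finset.sum_congr rfl fun l _ => ?_
  rw [mul_comm ((l : ℂ)) ((y : ℂ)), qcpow_mul_nat]
  ring

/-- series representation of `β_{k,q}^h(x)` for `x > 0`. -/
theorem qbeta_eq_tsum (q : ℝ) (hq0 : 0 < q) (hq1 : q < 1)
    (h : ℂ) (hh : 1 < h.re) (k : ℕ) (hk : 1 ≤ k) (x : ℝ) (hx : 0 < x) :
    Summable (fun n : ℕ => qcpow q (h * (n : ℂ) + (x : ℂ)) * ((qnumR q (x + n) : ℂ) ^ (k - 1))) ∧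
    Summable (fun n : ℕ => qcpow q ((h - 1) * (n : ℂ)) * ((qnumR q (x + n) : ℂ) ^ k)) ∧
    qbeta q h k x =
      -(k : ℂ) * ∑' n : ℕ, qcpow q (h * (n : ℂ) + (x : ℂ)) * ((qnumR q (x + n) : ℂ) ^ (k - 1)) +
      (h - 1) * (1 - (q : ℂ)) *
        ∑' n : ℕ, qcpow q ((h - 1) * (n : ℂ)) * ((qnumR q (x + n) : ℂ) ^ k) := by
  obtain ⟨m, rfl⟩ : ∃ m, k = m + 1 := ⟨k - 1, (Nat.succ_pred_eq_of_pos hk).symm⟩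
  have hqne : (1 : ℂ) - (q : ℂ) ≠ 0 := by
    rw [sub_ne_zero]
    intro e
    have : (q : ℝ) = 1 := by exact_mod_cast e.symm
    linarith
  have hre1 : ∀ l : ℕ, 0 < ((l : ℂ) + h).re := by
    intro l
    have : (0 : ℝ) ≤ (l : ℝ) := Nat.cast_nonneg l
    simp only [Complex.add_re, Complex.natCast_re]
    linarith
  have hre2 : ∀ l : ℕ, 0 < ((l : ℂ) + h - 1).re := by
    intro l
    have : (0 : ℝ) ≤ (l : ℝ) := Nat.cast_nonneg l
    simp only [Complex.sub_re, Complex.add_re, Complex.natCast_re, Complex.one_re]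
    linarith
  set A : ℕ → ℂ := fun l =>
    (m.choose l : ℂ) * (-1) ^ l * qcpow q (((l : ℂ) + 1) * (x : ℂ)) * (1 - (q : ℂ))⁻¹ ^ m with hA
  set B : ℕ → ℂ := fun l =>
    ((m + 1).choose l : ℂ) * (-1) ^ l * qcpow q ((l : ℂ) * (x : ℂ)) * (1 - (q : ℂ))⁻¹ ^ (m + 1)
    with hB
  have key1 : ∀ n : ℕ, qcpow q (h * (n : ℂ) + (x : ℂ)) * ((qnumR q (x + n) : ℂ) ^ (m + 1 - 1))
      = ∑ l ∈ Finset.range (m + 1), A l * qcpow q (((l : ℂ) + h) * (n : ℂ)) := by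
    intro n
    simp only [Nat.add_sub_cancel]
    rw [qnumR_pow, ← mul_assoc, Finset.mul_sum, Finset.sum_mul]
    refine Finset.sum_congr rfl fun l _ => ?_
    have e : qcpow q (h * (n : ℂ) + (x : ℂ)) * qcpow q ((l : ℂ) * ((x + n : ℝ) : ℂ))
        = qcpow q (((l : ℂ) + 1) * (x : ℂ)) * qcpow q (((l : ℂ) + h) * (n : ℂ)) := by
      rw [← qcpow_add', ← qcpow_add']
      congr 1
      push_cast
      ring
    simp only [hA]
    linear_combination ((m.choose l : ℂ) * (-1) ^ l * (1 - (q : ℂ))⁻¹ ^ m) * e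
  have key2 : ∀ n : ℕ, qcpow q ((h - 1) * (n : ℂ)) * ((qnumR q (x + n) : ℂ) ^ (m + 1))
      = ∑ l ∈ Finset.range (m + 1 + 1), B l * qcpow q (((l : ℂ) + h - 1) * (n : ℂ)) := by
    intro n
    rw [qnumR_pow, ← mul_assoc, Finset.mul_sum, Finset.sum_mul]
    refine Finset.sum_congr rfl fun l _ => ?_
    have e : qcpow q ((h - 1) * (n : ℂ)) * qcpow q ((l : ℂ) * ((x + n : ℝ) : ℂ))
        = qcpow q ((l : ℂ) * (x : ℂ)) * qcpow q (((l : ℂ) + h - 1) * (n : ℂ)) := by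
      rw [← qcpow_add', ← qcpow_add']
      congr 1
      push_cast
      ring
    simp only [hB]
    linear_combination (((m + 1).choose l : ℂ) * (-1) ^ l * (1 - (q : ℂ))⁻¹ ^ (m + 1)) * e
  have sum1 : ∀ l : ℕ, Summable (fun n : ℕ => A l * qcpow q (((l : ℂ) + h) * (n : ℂ))) :=
    fun l => (summable_qcpow hq0 hq1 (hre1 l)).mul_left _
  have sum2 : ∀ l : ℕ, Summable (fun n : ℕ => B l * qcpow q (((l : ℂ) + h - 1) * (n : ℂ))) :=
    fun l => (summable_qcpow hq0 hq1 (hre2 l)).mul_left _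
  have S1 : Summable (fun n : ℕ =>
      qcpow q (h * (n : ℂ) + (x : ℂ)) * ((qnumR q (x + n) : ℂ) ^ (m + 1 - 1))) :=
    Summable.congr (summable_sum fun l _ => sum1 l) (fun n => (key1 n).symm)
  have S2 : Summable (fun n : ℕ =>
      qcpow q ((h - 1) * (n : ℂ)) * ((qnumR q (x + n) : ℂ) ^ (m + 1))) :=
    Summable.congr (summable_sum fun l _ => sum2 l) (fun n => (key2 n).symm)
  refine ⟨S1, S2, ?_⟩
  have t1 : (∑' n : ℕ, qcpow q (h * (n : ℂ) + (x : ℂ)) * ((qnumR q (x + n) : ℂ) ^ (m + 1 - 1)))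
      = ∑ l ∈ Finset.range (m + 1), A l * (1 - qcpow q ((l : ℂ) + h))⁻¹ := by
    rw [tsum_congr key1, Summable.tsum_finsetSum (fun l _ => sum1 l)]
    refine Finset.sum_congr rfl fun l _ => ?_
    rw [tsum_mul_left, tsum_qcpow hq0 hq1 (hre1 l)]
  have t2 : (∑' n : ℕ, qcpow q ((h - 1) * (n : ℂ)) * ((qnumR q (x + n) : ℂ) ^ (m + 1)))
      = ∑ l ∈ Finset.range (m + 1 + 1), B l * (1 - qcpow q ((l : ℂ) + h - 1))⁻¹ := by
    rw [tsum_congr key2, Summable.tsum_finsetSum (fun l _ => sum2 l)]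
    refine Finset.sum_congr rfl fun l _ => ?_
    rw [tsum_mul_left, tsum_qcpow hq0 hq1 (hre2 l)]
  rw [t1, t2]
  set G : ℕ → ℂ := fun l =>
    (l : ℂ) * ((m + 1).choose l : ℂ) * (-1) ^ l * qcpow q ((l : ℂ) * (x : ℂ)) *
      (1 - (q : ℂ))⁻¹ ^ m * (1 - qcpow q ((l : ℂ) + h - 1))⁻¹ with hG
  have R1 : -(((m + 1 : ℕ)) : ℂ) *
        ∑ l ∈ Finset.range (m + 1), A l * (1 - qcpow q ((l : ℂ) + h))⁻¹
      = ∑ l ∈ Finset.range (m + 1 + 1), G l := by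
    rw [Finset.mul_sum, Finset.sum_range_succ' G (m + 1)]
    have hG0 : G 0 = 0 := by simp [hG]
    rw [hG0, add_zero]
    refine Finset.sum_congr rfl fun l _ => ?_
    have hc : ((m : ℂ) + 1) * (m.choose l : ℂ)
        = (((m + 1).choose (l + 1) : ℂ)) * ((l : ℂ) + 1) := by
      exact_mod_cast Nat.add_one_mul_choose_eq m l
    have e1 : ((l : ℂ) + 1) + h - 1 = (l : ℂ) + h := by ring
    simp only [hG, hA, Nat.cast_add, Nat.cast_one, pow_succ, e1]
    linear_combination (-(-1 : ℂ) ^ l * qcpow q (((l : ℂ) + 1) * (x : ℂ)) *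
      (1 - (q : ℂ))⁻¹ ^ m * (1 - qcpow q ((l : ℂ) + h))⁻¹) * hc
  rw [R1, qbeta, Finset.mul_sum, Finset.mul_sum, ← Finset.sum_add_distrib]
  refine Finset.sum_congr rfl fun l _ => ?_
  have hd := one_sub_qcpow_ne hq0 hq1 (hre2 l)
  simp only [hG, hB, qnum]
  field_simp
  linear_combination ((1 - (q : ℂ))⁻¹ ^ m * ((m + 1).choose l : ℂ) * qcpow q ((l : ℂ) * (x : ℂ)) * (l : ℂ)) * mul_inv_cancel₀ hqne
end
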